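/- Let M > 0, 0 < a ≤ M, m ∈ ℤ, set Δ(r) := r² − 2Mr + a², r₊ := M + √(M² − a²), Σ(r,θ) := r² + a² cos²θ, w(r,θ) := (r²+a²)²/Δ(r) − a² sin²θ, Ω := (r₊,∞) × (0,π), and let m₀ ≥ (|m|a/(2Mr₊)) · √(1 + 2M/r₊ + a²/r₊²). Then for every f ∈ C²(Ω,ℂ) with compact support contained in Ω one has ∫_Ω sinθ · [ Δ(r)|∂f/∂r|² + |∂f/∂θ|² + ( m²/sin²θ − m²a²/Δ(r) + m₀² Σ(r,θ) + 2m²a²r/(r₊ Δ(r)) − (m²a²/(4M²r₊²)) w(r,θ) ) |f|² ] dr dθ ≥ 0. -/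

import Mathlib

open MeasureTheory

/-- Kerr horizon function `Δ(r) = r² − 2Mr + a²`. -/
noncomputable def kerrDelta (M a r : ℝ) : ℝ := r ^ 2 - 2 * M * r + a ^ 2

/-- Outer horizon radius `r₊ = M + √(M² − a²)`. -/
noncomputable def rPlus (M a : ℝ) : ℝ := M + Real.sqrt (M ^ 2 - a ^ 2)

/-- `Σ(r,θ) = r² + a² cos²θ`. -/
noncomputable def kerrSigma (a r θ : ℝ) : ℝ := r ^ 2 + a ^ 2 * Real.cos θ ^ 2

/-- The weight `w(r,θ) = (r²+a²)²/Δ(r) − a² sin²θ`. -/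
noncomputable def kerrW (M a r θ : ℝ) : ℝ :=
  (r ^ 2 + a ^ 2) ^ 2 / kerrDelta M a r - a ^ 2 * Real.sin θ ^ 2

/-- Partial derivative in the first (radial) variable. -/
noncomputable def pdr (f : ℝ × ℝ → ℂ) (p : ℝ × ℝ) : ℂ := deriv (fun x => f (x, p.2)) p.1

/-- Partial derivative in the second (angular) variable. -/
noncomputable def pdθ (f : ℝ × ℝ → ℂ) (p : ℝ × ℝ) : ℂ := deriv (fun y => f (p.1, y)) p.2

/-- Key polynomial inequality for the Kerr mass bound. -/
lemma kerrQ_nonneg (M a rp r : ℝ) (ha : 0 < a) (harp : a ≤ rp) (hrp0 : 0 < rp)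
    (hrpeq : rp ^ 2 - 2 * M * rp + a ^ 2 = 0) (hr : rp < r) :
    0 ≤ 4*M^2*rp^3*(r^2-2*M*r+a^2) + 4*M*a^2*r^2*(r^2-2*M*r+a^2)
      - 4*M^2*rp^3*a^2 + 8*M^2*rp^2*a^2*r - a^2*rp*(r^2+a^2)^2 := by
  have ht : 0 ≤ r - rp := by linarith
  have ha2 : a^2 ≤ rp^2 := by nlinarith
  have hfact : rp^2 * (4*M^2*rp^3*(r^2-2*M*r+a^2) + 4*M*a^2*r^2*(r^2-2*M*r+a^2)
      - 4*M^2*rp^3*a^2 + 8*M^2*rp^2*a^2*r - a^2*rp*(r^2+a^2)^2)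
      = (r - rp) * ( a^2*rp*(rp^2+2*a^2)*(r-rp)^3
        + 2*a^2*(rp^4+2*a^2*rp^2-a^4)*(r-rp)^2
        + rp*(rp^6+2*a^2*rp^4+a^4*rp^2-4*a^6)*(r-rp)
        + rp^2*(rp^2-a^2)*(rp^2+a^2)^2 ) := by
    linear_combination (-r*rp^2*a^4 + r*rp^6 - 2*r^2*rp*a^4 - r^2*rp^3*a^2 - r^2*rp^5
      + 2*r^3*a^4 + 2*r^3*rp^2*a^2 - 2*r^4*rp*a^2 - 2*M*r*rp^3*a^2 + 2*M*r*rp^5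
      - 2*M*r^2*rp^4 + 4*M*r^3*rp*a^2 + 4*M^2*r*rp^4) * hrpeq
  have hc2 : 0 ≤ rp^4+2*a^2*rp^2-a^4 := by
    nlinarith [mul_nonneg (sub_nonneg.2 ha2) (by positivity : (0:ℝ) ≤ rp^2+a^2)]
  have e1 : a^6 ≤ rp^6 := by
    calc a^6 = (a^2)^3 := by ring
    _ ≤ (rp^2)^3 := pow_le_pow_left₀ (by positivity) ha2 3
    _ = rp^6 := by ring
  have f2 : a^2*a^4 ≤ a^2*rp^4 := by
    nlinarith [mul_le_mul_of_nonneg_left ha2 (sq_nonneg a), sq_nonneg (rp^2-a^2)]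
  have f3 : a^4*a^2 ≤ a^4*rp^2 :=
    mul_le_mul_of_nonneg_left ha2 (by positivity)
  have hc1 : 0 ≤ rp^6+2*a^2*rp^4+a^4*rp^2-4*a^6 := by nlinarith [e1, f2, f3]
  have hG : 0 ≤ a^2*rp*(rp^2+2*a^2)*(r-rp)^3
        + 2*a^2*(rp^4+2*a^2*rp^2-a^4)*(r-rp)^2
        + rp*(rp^6+2*a^2*rp^4+a^4*rp^2-4*a^6)*(r-rp)
        + rp^2*(rp^2-a^2)*(rp^2+a^2)^2 := by
    have h1 : 0 ≤ a^2*rp*(rp^2+2*a^2)*(r-rp)^3 := by positivity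
    have h2 : 0 ≤ 2*a^2*(rp^4+2*a^2*rp^2-a^4)*(r-rp)^2 :=
      mul_nonneg (mul_nonneg (by positivity) hc2) (sq_nonneg _)
    have h3 : 0 ≤ rp*(rp^6+2*a^2*rp^4+a^4*rp^2-4*a^6)*(r-rp) :=
      mul_nonneg (mul_nonneg hrp0.le hc1) ht
    have h4 : 0 ≤ rp^2*(rp^2-a^2)*(rp^2+a^2)^2 :=
      mul_nonneg (mul_nonneg (sq_nonneg _) (sub_nonneg.2 ha2)) (sq_nonneg _)
    linarith
  have h0 : rp^2 * 0 ≤ rp^2 * (4*M^2*rp^3*(r^2-2*M*r+a^2) + 4*M*a^2*r^2*(r^2-2*M*r+a^2)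
      - 4*M^2*rp^3*a^2 + 8*M^2*rp^2*a^2*r - a^2*rp*(r^2+a^2)^2) := by
    rw [mul_zero]; nlinarith [mul_nonneg ht hG, hfact]
  exact le_of_mul_le_mul_left h0 (by positivity)

set_option maxHeartbeats 1200000 in
theorem stmt_10 (M a : ℝ) (m : ℤ) (m₀ : ℝ) (hM : 0 < M) (ha : 0 < a) (haM : a ≤ M)
    (hm₀ : m₀ ≥ |(m : ℝ)| * a / (2 * M * rPlus M a) *
      Real.sqrt (1 + 2 * M / rPlus M a + a ^ 2 / rPlus M a ^ 2))
    (f : ℝ × ℝ → ℂ) (hf : ContDiff ℝ 2 f) (hfc : HasCompactSupport f)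
    (hfsupp : tsupport f ⊆ Set.Ioi (rPlus M a) ×ˢ Set.Ioo 0 Real.pi) :
    (0 : ℝ) ≤
      ∫ p in Set.Ioi (rPlus M a) ×ˢ Set.Ioo 0 Real.pi,
        Real.sin p.2 *
          (kerrDelta M a p.1 * ‖pdr f p‖ ^ 2 + ‖pdθ f p‖ ^ 2 +
            ((m : ℝ) ^ 2 / Real.sin p.2 ^ 2 -
                (m : ℝ) ^ 2 * a ^ 2 / kerrDelta M a p.1 +
                m₀ ^ 2 * kerrSigma a p.1 p.2 +
                2 * (m : ℝ) ^ 2 * a ^ 2 * p.1 / (rPlus M a * kerrDelta M a p.1) -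
                (m : ℝ) ^ 2 * a ^ 2 / (4 * M ^ 2 * rPlus M a ^ 2) * kerrW M a p.1 p.2) *
              ‖f p‖ ^ 2) := by
  -- basic facts about rp
  set rp : ℝ := rPlus M a with hrp_def
  have hMa : 0 ≤ M ^ 2 - a ^ 2 := by nlinarith
  have hsq : Real.sqrt (M ^ 2 - a ^ 2) ^ 2 = M ^ 2 - a ^ 2 := Real.sq_sqrt hMa
  have hrpM : M ≤ rp := le_add_of_nonneg_right (Real.sqrt_nonneg _)
  have hrp0 : 0 < rp := lt_of_lt_of_le hM hrpM
  have harp : a ≤ rp := le_trans haM hrpM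
  have hrpeq : rp ^ 2 - 2 * M * rp + a ^ 2 = 0 := by
    rw [hrp_def, rPlus]; linear_combination hsq
  -- the mass bound in usable form:  m² a² ≤ m₀² M rp³
  have hXval : 1 + 2 * M / rp + a ^ 2 / rp ^ 2 = 4 * M / rp := by
    field_simp
    linear_combination hrpeq
  have hq0 : 0 ≤ |(m : ℝ)| * a / (2 * M * rp) := by positivity
  have hm₀0 : 0 ≤ m₀ := le_trans (mul_nonneg hq0 (Real.sqrt_nonneg _)) hm₀
  have hkey : (m : ℝ) ^ 2 * a ^ 2 ≤ m₀ ^ 2 * (M * rp ^ 3) := by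
    have h1 : (|(m : ℝ)| * a / (2 * M * rp) * Real.sqrt (1 + 2 * M / rp + a ^ 2 / rp ^ 2)) ^ 2
        ≤ m₀ ^ 2 := by
      apply pow_le_pow_left₀ (mul_nonneg hq0 (Real.sqrt_nonneg _)) hm₀ 2
    have h2 : (|(m : ℝ)| * a / (2 * M * rp) * Real.sqrt (1 + 2 * M / rp + a ^ 2 / rp ^ 2)) ^ 2
        = (m : ℝ) ^ 2 * a ^ 2 / (M * rp ^ 3) := by
      rw [mul_pow, Real.sq_sqrt (by rw [hXval]; positivity), hXval, div_pow, mul_pow, sq_abs]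
      field_simp
      ring
    rw [h2] at h1
    calc (m : ℝ) ^ 2 * a ^ 2 = ((m : ℝ) ^ 2 * a ^ 2 / (M * rp ^ 3)) * (M * rp ^ 3) := by
          field_simp
      _ ≤ m₀ ^ 2 * (M * rp ^ 3) := mul_le_mul_of_nonneg_right h1 (by positivity)
  -- pointwise nonnegativity
  apply setIntegral_nonneg (measurableSet_Ioi.prod measurableSet_Ioo)
  rintro ⟨r, θ⟩ ⟨hr, hθ⟩
  simp only [Set.mem_Ioi] at hr
  obtain ⟨hθ0, hθπ⟩ := hθ
  have hS : 0 < Real.sin θ := Real.sin_pos_of_pos_of_lt_pi hθ0 hθπ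
  have hS1 : Real.sin θ ≤ 1 := Real.sin_le_one θ
  have hC : Real.sin θ ^ 2 + Real.cos θ ^ 2 = 1 := Real.sin_sq_add_cos_sq θ
  have hD : 0 < kerrDelta M a r := by
    rw [kerrDelta]
    nlinarith [mul_pos (sub_pos.2 hr) (show (0:ℝ) < r + rp - 2 * M by nlinarith)]
  set S := Real.sin θ with hS_def
  set C := Real.cos θ with hC_def
  apply mul_nonneg hS.le
  apply add_nonneg (add_nonneg (mul_nonneg hD.le (by positivity)) (by positivity))
  apply mul_nonneg _ (by positivity)
  -- the potential term
  have hDval : kerrDelta M a r = r ^ 2 - 2 * M * r + a ^ 2 := rfl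
  have hQ := kerrQ_nonneg M a rp r ha harp hrp0 hrpeq hr
  have hN : 0 ≤ 4*(m:ℝ)^2*M^2*rp^3*(r^2-2*M*r+a^2)
      + 4*m₀^2*(r^2+a^2*C^2)*S^2*M^2*rp^3*(r^2-2*M*r+a^2)
      - 4*(m:ℝ)^2*a^2*S^2*M^2*rp^3 + 8*(m:ℝ)^2*a^2*r*S^2*M^2*rp^2
      - (m:ℝ)^2*a^2*rp*S^2*((r^2+a^2)^2 - a^2*S^2*(r^2-2*M*r+a^2)) := by
    have hS2 : S ^ 2 ≤ 1 := by nlinarith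
    have hDp : (0:ℝ) < r^2-2*M*r+a^2 := by rw [← hDval]; exact hD
    have hq1 : 0 ≤ (m:ℝ)^2 * S^2 * (4*M^2*rp^3*(r^2-2*M*r+a^2) + 4*M*a^2*r^2*(r^2-2*M*r+a^2)
        - 4*M^2*rp^3*a^2 + 8*M^2*rp^2*a^2*r - a^2*rp*(r^2+a^2)^2) :=
      mul_nonneg (by positivity) hQ
    have hq2 : 0 ≤ 4*(m:ℝ)^2*M^2*rp^3*(r^2-2*M*r+a^2)*(1 - S^2) :=
      mul_nonneg (by positivity) (by linarith)
    have hq3 : 0 ≤ 4*S^2*(r^2-2*M*r+a^2)*(m₀^2*(M*rp^3)*(M*(r^2+a^2*C^2)) - (m:ℝ)^2*a^2*(M*(r^2+a^2*C^2))) := by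
      apply mul_nonneg (by positivity)
      have := mul_le_mul_of_nonneg_right hkey (show (0:ℝ) ≤ M*(r^2+a^2*C^2) by positivity)
      linarith
    have hq4 : 0 ≤ (m:ℝ)^2*a^4*rp*S^4*(r^2-2*M*r+a^2) := by positivity
    have hq5 : 0 ≤ 4*S^2*(r^2-2*M*r+a^2)*((m:ℝ)^2*a^4*M*C^2) := by positivity
    linarith [hq1, hq2, hq3, hq4, hq5]
  have heq : (m : ℝ) ^ 2 / S ^ 2 - (m : ℝ) ^ 2 * a ^ 2 / kerrDelta M a r +
      m₀ ^ 2 * kerrSigma a r θ + 2 * (m : ℝ) ^ 2 * a ^ 2 * r / (rp * kerrDelta M a r) -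
      (m : ℝ) ^ 2 * a ^ 2 / (4 * M ^ 2 * rp ^ 2) * kerrW M a r θ
      = (4*(m:ℝ)^2*M^2*rp^3*(r^2-2*M*r+a^2)
          + 4*m₀^2*(r^2+a^2*C^2)*S^2*M^2*rp^3*(r^2-2*M*r+a^2)
          - 4*(m:ℝ)^2*a^2*S^2*M^2*rp^3 + 8*(m:ℝ)^2*a^2*r*S^2*M^2*rp^2
          - (m:ℝ)^2*a^2*rp*S^2*((r^2+a^2)^2 - a^2*S^2*(r^2-2*M*r+a^2)))
        / (4*M^2*rp^3*S^2*(r^2-2*M*r+a^2)) := by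
    rw [kerrW, kerrSigma, hDval, ← hS_def, ← hC_def]
    have hDne : r^2-2*M*r+a^2 ≠ 0 := by rw [← hDval]; exact ne_of_gt hD
    generalize r^2-2*M*r+a^2 = D at hDne ⊢
    field_simp
    ring
  rw [heq]
  exact div_nonneg hN (by positivity)
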